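/- The node-centered cosine and sine matrices satisfy: Ȟ_c² + Ȟ_s² = I_n; Ȟ_c·Ȟ_s = Ȟ_s·Ȟ_c = 0; Ȟ_c·1_n = √n·e_1; and Ȟ_s·1_n = 0_n, where 1_n is the all-ones vector, 0_n the zero vector, and e_1 the first column of the identity matrix. -/

import Mathlib

open Matrix Real

/-- The node-centered cosine matrix `(Ȟ_c)_{j,k} = n^{−1/2}·cos(2jkπ/n)`. -/
noncomputable def Hc (n : ℕ) : Matrix (Fin n) (Fin n) ℝ :=
  fun j k => Real.cos (2 * (j.val : ℝ) * (k.val : ℝ) * Real.pi / n) / Real.sqrt n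

/-- The node-centered sine matrix `(Ȟ_s)_{j,k} = n^{−1/2}·sin(2jkπ/n)`. -/
noncomputable def Hs (n : ℕ) : Matrix (Fin n) (Fin n) ℝ :=
  fun j k => Real.sin (2 * (j.val : ℝ) * (k.val : ℝ) * Real.pi / n) / Real.sqrt n

lemma sum_exp_int (n : ℕ) (hn : 1 ≤ n) (m : ℤ) :
    ∑ k : Fin n, Complex.exp (2 * Real.pi * Complex.I * m * k / n)
      = if (n : ℤ) ∣ m then (n : ℂ) else 0 := by
  have hn0 : (n : ℂ) ≠ 0 := Nat.cast_ne_zero.mpr (by omega)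
  have hπ : (Real.pi : ℂ) ≠ 0 := Complex.ofReal_ne_zero.mpr Real.pi_ne_zero
  by_cases hd : (n : ℤ) ∣ m
  · obtain ⟨t, ht⟩ := hd
    rw [if_pos ⟨t, ht⟩]
    have h1 : ∀ k : Fin n, Complex.exp (2 * Real.pi * Complex.I * m * k / n) = 1 := by
      intro k
      have hm : (m : ℂ) = (n : ℂ) * (t : ℂ) := by exact_mod_cast congrArg (Int.cast : ℤ → ℂ) ht
      have harg : (2 * Real.pi * Complex.I * m * k / n)
          = ((t * (k : ℕ) : ℤ) : ℂ) * (2 * Real.pi * Complex.I) := by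
        rw [hm, div_eq_iff hn0]; push_cast; ring
      rw [harg, Complex.exp_int_mul_two_pi_mul_I]
    rw [Finset.sum_congr rfl (fun k _ => h1 k)]
    simp
  · rw [if_neg hd]
    set ζ : ℂ := Complex.exp (2 * Real.pi * Complex.I * m / n) with hζ
    have hterm : ∀ k : Fin n, Complex.exp (2 * Real.pi * Complex.I * m * k / n) = ζ ^ (k : ℕ) := by
      intro k
      rw [hζ, ← Complex.exp_nat_mul]
      congr 1
      ring
    have hζn : ζ ^ n = 1 := by
      rw [hζ, ← Complex.exp_nat_mul]
      have h2 : (n : ℂ) * (2 * Real.pi * Complex.I * m / n)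
          = (m : ℂ) * (2 * Real.pi * Complex.I) := by
        field_simp
      rw [h2, Complex.exp_int_mul_two_pi_mul_I]
    have hζ1 : ζ ≠ 1 := by
      intro h
      rw [hζ, Complex.exp_eq_one_iff] at h
      obtain ⟨t, hteq⟩ := h
      apply hd
      refine ⟨t, ?_⟩
      have hmc : (m : ℂ) = (n : ℂ) * (t : ℂ) := by
        field_simp at hteq
        have h2 : (2 * Real.pi * Complex.I) * (m : ℂ)
            = (2 * Real.pi * Complex.I) * ((n : ℂ) * t) := by
          rw [mul_comm] at hteq ⊢
          linear_combination (2 * Real.pi * Complex.I) * hteq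
        exact mul_left_cancel₀ (by simp [hπ, Complex.I_ne_zero]) h2
      exact_mod_cast hmc
    calc ∑ k : Fin n, Complex.exp (2 * Real.pi * Complex.I * m * k / n)
        = ∑ k ∈ Finset.range n, ζ ^ k := by
          rw [← Fin.sum_univ_eq_sum_range (fun k => ζ ^ k) n]
          exact Finset.sum_congr rfl (fun k _ => hterm k)
      _ = (ζ ^ n - 1) / (ζ - 1) := geom_sum_eq hζ1 n
      _ = 0 := by rw [hζn]; simp

lemma sum_cos_int (n : ℕ) (hn : 1 ≤ n) (m : ℤ) :
    ∑ k : Fin n, Real.cos (2 * Real.pi * m * k / n)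
      = if (n : ℤ) ∣ m then (n : ℝ) else 0 := by
  have key := sum_exp_int n hn m
  have harg : ∀ k : Fin n, (2 * Real.pi * Complex.I * m * k / n)
      = ((2 * Real.pi * m * k / n : ℝ) : ℂ) * Complex.I := by
    intro k; push_cast; ring
  rw [Finset.sum_congr rfl (fun k _ => by rw [harg k])] at key
  have := congrArg Complex.re key
  rw [Complex.re_sum] at this
  simp only [Complex.exp_ofReal_mul_I_re] at this
  rw [this]
  split <;> simp

lemma sum_sin_int (n : ℕ) (hn : 1 ≤ n) (m : ℤ) :
    ∑ k : Fin n, Real.sin (2 * Real.pi * m * k / n) = 0 := by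
  have key := sum_exp_int n hn m
  have harg : ∀ k : Fin n, (2 * Real.pi * Complex.I * m * k / n)
      = ((2 * Real.pi * m * k / n : ℝ) : ℂ) * Complex.I := by
    intro k; push_cast; ring
  rw [Finset.sum_congr rfl (fun k _ => by rw [harg k])] at key
  have := congrArg Complex.im key
  rw [Complex.im_sum] at this
  simp only [Complex.exp_mul_I, Complex.add_im, Complex.cos_ofReal_im, Complex.mul_im,
    Complex.sin_ofReal_re, Complex.sin_ofReal_im, Complex.I_re, Complex.I_im] at this
  simp only [mul_zero, mul_one, zero_add, zero_mul, sub_zero, add_zero, zero_sub] at this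
  rw [this]
  split <;> simp

/-- `Ȟ_c² + Ȟ_s² = I_n`; `Ȟ_c·Ȟ_s = Ȟ_s·Ȟ_c = 0`; `Ȟ_c·1_n = √n·e₁`; `Ȟ_s·1_n = 0_n`. -/
theorem node_hartley_cos_sin_props (n : ℕ) (hn : 1 ≤ n) :
    Hc n * Hc n + Hs n * Hs n = (1 : Matrix (Fin n) (Fin n) ℝ) ∧
    Hc n * Hs n = 0 ∧ Hs n * Hc n = 0 ∧
    (Hc n).mulVec (fun _ => 1) =
      Real.sqrt n • (fun i : Fin n => if i.val = 0 then (1 : ℝ) else 0) ∧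
    (Hs n).mulVec (fun _ => 1) = 0 := by
  have hnR : (0 : ℝ) < n := by exact_mod_cast hn
  have hnne : (n : ℝ) ≠ 0 := ne_of_gt hnR
  have hs : Real.sqrt n * Real.sqrt n = n := Real.mul_self_sqrt (le_of_lt hnR)
  have hsne : Real.sqrt n ≠ 0 := by positivity
  have hdvd : ∀ j l : Fin n, ((n : ℤ) ∣ ((j : ℕ) : ℤ) - ((l : ℕ) : ℤ)) ↔ j = l := by
    intro j l
    constructor
    · intro ht
      have hj := j.isLt
      have hl := l.isLt
      have h0 : ((j : ℕ) : ℤ) - ((l : ℕ) : ℤ) = 0 := by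
        apply Int.eq_zero_of_abs_lt_dvd ht
        rw [abs_lt]
        constructor <;> [push_cast; push_cast] <;> omega
      exact Fin.ext (by omega)
    · rintro rfl; simp
  refine ⟨?_, ?_, ?_, ?_, ?_⟩
  · ext j l
    rw [Matrix.add_apply, Matrix.mul_apply, Matrix.mul_apply, ← Finset.sum_add_distrib]
    have hterm : ∀ k : Fin n,
        Hc n j k * Hc n k l + Hs n j k * Hs n k l
          = Real.cos (2 * Real.pi * ((((j : ℕ) : ℤ) - ((l : ℕ) : ℤ) : ℤ) : ℝ) * k / n) / n := by
      intro k
      simp only [Hc, Hs]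
      rw [div_mul_div_comm, div_mul_div_comm, hs, ← add_div, ← Real.cos_sub]
      congr 2
      push_cast
      ring
    rw [Finset.sum_congr rfl (fun k _ => hterm k), ← Finset.sum_div,
      sum_cos_int n hn _, Matrix.one_apply]
    by_cases h : j = l
    · rw [if_pos ((hdvd j l).mpr h), if_pos h, div_self hnne]
    · rw [if_neg (fun hh => h ((hdvd j l).mp hh)), if_neg h, zero_div]
  · ext j l
    rw [Matrix.mul_apply, Matrix.zero_apply]
    have hterm : ∀ k : Fin n,
        Hc n j k * Hs n k l
          = (Real.sin (2 * Real.pi * ((((j : ℕ) : ℤ) + ((l : ℕ) : ℤ) : ℤ) : ℝ) * k / n)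
             - Real.sin (2 * Real.pi * ((((j : ℕ) : ℤ) - ((l : ℕ) : ℤ) : ℤ) : ℝ) * k / n))
            / (2 * n) := by
      intro k
      simp only [Hc, Hs]
      rw [div_mul_div_comm, hs]
      have hab : ∀ a b : ℝ, Real.cos a * Real.sin b = (Real.sin (a + b) - Real.sin (a - b)) / 2 := by
        intro a b
        rw [Real.sin_add, Real.sin_sub]
        ring
      rw [hab]
      rw [show 2 * (j : ℝ) * (k : ℝ) * Real.pi / n + 2 * (k : ℝ) * (l : ℝ) * Real.pi / n
          = 2 * Real.pi * ((((j : ℕ) : ℤ) + ((l : ℕ) : ℤ) : ℤ) : ℝ) * k / n by push_cast; ring,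
        show 2 * (j : ℝ) * (k : ℝ) * Real.pi / n - 2 * (k : ℝ) * (l : ℝ) * Real.pi / n
          = 2 * Real.pi * ((((j : ℕ) : ℤ) - ((l : ℕ) : ℤ) : ℤ) : ℝ) * k / n by push_cast; ring]
      ring
    rw [Finset.sum_congr rfl (fun k _ => hterm k), ← Finset.sum_div, Finset.sum_sub_distrib,
      sum_sin_int n hn _, sum_sin_int n hn _]
    simp
  · ext j l
    rw [Matrix.mul_apply, Matrix.zero_apply]
    have hterm : ∀ k : Fin n,
        Hs n j k * Hc n k l
          = (Real.sin (2 * Real.pi * ((((j : ℕ) : ℤ) + ((l : ℕ) : ℤ) : ℤ) : ℝ) * k / n)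
             + Real.sin (2 * Real.pi * ((((j : ℕ) : ℤ) - ((l : ℕ) : ℤ) : ℤ) : ℝ) * k / n))
            / (2 * n) := by
      intro k
      simp only [Hc, Hs]
      rw [div_mul_div_comm, hs]
      have hab : ∀ a b : ℝ, Real.sin a * Real.cos b = (Real.sin (a + b) + Real.sin (a - b)) / 2 := by
        intro a b
        rw [Real.sin_add, Real.sin_sub]
        ring
      rw [hab]
      rw [show 2 * (j : ℝ) * (k : ℝ) * Real.pi / n + 2 * (k : ℝ) * (l : ℝ) * Real.pi / n
          = 2 * Real.pi * ((((j : ℕ) : ℤ) + ((l : ℕ) : ℤ) : ℤ) : ℝ) * k / n by push_cast; ring,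
        show 2 * (j : ℝ) * (k : ℝ) * Real.pi / n - 2 * (k : ℝ) * (l : ℝ) * Real.pi / n
          = 2 * Real.pi * ((((j : ℕ) : ℤ) - ((l : ℕ) : ℤ) : ℤ) : ℝ) * k / n by push_cast; ring]
      ring
    rw [Finset.sum_congr rfl (fun k _ => hterm k), ← Finset.sum_div, Finset.sum_add_distrib,
      sum_sin_int n hn _, sum_sin_int n hn _]
    simp
  · funext j
    rw [Matrix.mulVec, dotProduct]
    simp only [Pi.smul_apply, smul_eq_mul]
    have hterm : ∀ k : Fin n,
        Hc n j k * 1 = Real.cos (2 * Real.pi * (((j : ℕ) : ℤ) : ℝ) * k / n) / Real.sqrt n := by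
      intro k
      simp only [Hc, mul_one]
      congr 2
      push_cast
      ring
    rw [Finset.sum_congr rfl (fun k _ => hterm k), ← Finset.sum_div, sum_cos_int n hn _]
    by_cases h : (j : ℕ) = 0
    · have : (n : ℤ) ∣ ((j : ℕ) : ℤ) := by simp [h]
      rw [if_pos this, if_pos h, mul_one]
      rw [← hs]
      field_simp
      rw [Real.sqrt_sq (Real.sqrt_nonneg _)]
    · have : ¬ (n : ℤ) ∣ ((j : ℕ) : ℤ) := by
        intro ht
        rw [Int.natCast_dvd_natCast] at ht
        exact h (Nat.eq_zero_of_dvd_of_lt ht j.isLt)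
      rw [if_neg this, if_neg h, zero_div, mul_zero]
  · funext j
    rw [Matrix.mulVec, dotProduct]
    have hterm : ∀ k : Fin n,
        Hs n j k * 1 = Real.sin (2 * Real.pi * (((j : ℕ) : ℤ) : ℝ) * k / n) / Real.sqrt n := by
      intro k
      simp only [Hs, mul_one]
      congr 2
      push_cast
      ring
    rw [Finset.sum_congr rfl (fun k _ => hterm k), ← Finset.sum_div, sum_sin_int n hn _]
    simp
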